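/- Let a,b be integer sequences of lengths g and gv respectively, and suppose (a,b) is a Golay pair of length g and (c,d) is a negaperiodic complementary ternary pair of length v and total weight w (entries in {0,±1}). Then the Turyn product sequences (e,f), defined by e(z) = ½(a(z)+b(z))c(z^g) + ½(a(z)-b(z))d(z^{-g})z^{gv-g} and f(z) = ½(b(z)-a(z))c(z^{-g})z^{gv-g} + ½(a(z)+b(z))d(z^g), form a negaperiodic complementary ternary pair of length gv and weight gw; that is, e(z)e(z^{-1}) + f(z)f(z^{-1}) ≡ gw (mod z^{gv}+1). -/

import Mathlib

/-- Ordinary autocorrelation. -/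
def AF (v : ℕ) (a : ℕ → ℤ) (k : ℕ) : ℤ :=
  ∑ i ∈ Finset.range (v - k), a i * a (i + k)

/-- Negaperiodic autocorrelation `NAF_a(k) = AF_a(k) - AF_a(v-k)`. -/
def NAF (v : ℕ) (a : ℕ → ℤ) (k : ℕ) : ℤ :=
  AF v a k - AF v a (v - k)

open Finset Polynomial

section Aux
lemma strictHalf {R : Type*} [CommRing R] (L : ℕ) (x : ℕ → ℤ) (u u' : R)
    (h : u * u' = 1) :
    ∑ i ∈ range L, ∑ j ∈ range i, ((x i * x j : ℤ) : R) * (u ^ i * u' ^ j)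
      = ∑ k ∈ Ico 1 L, (AF L x k : R) * u ^ k := by
  have huu : ∀ j : ℕ, u ^ j * u' ^ j = 1 := fun j => by rw [← mul_pow, h, one_pow]
  have step1 : ∀ i, ∑ j ∈ range i, ((x i * x j : ℤ) : R) * (u ^ i * u' ^ j)
      = ∑ k ∈ range i, ((x i * x (i - 1 - k) : ℤ) : R) * (u ^ i * u' ^ (i - 1 - k)) := by
    intro i
    exact (Finset.sum_range_reflect (fun j => ((x i * x j : ℤ) : R) * (u ^ i * u' ^ j)) i).symm
  simp only [step1]
  have step2 : ∑ i ∈ range L, ∑ k ∈ range i, ((x i * x (i - 1 - k) : ℤ) : R) * (u ^ i * u' ^ (i - 1 - k))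
      = ∑ k ∈ range L, ∑ i ∈ Ico (k + 1) L, ((x i * x (i - 1 - k) : ℤ) : R) * (u ^ i * u' ^ (i - 1 - k)) := by
    simpa [Nat.Ico_zero_eq_range] using
      (Finset.sum_Ico_Ico_comm' 0 L
        (fun k i => ((x i * x (i - 1 - k) : ℤ) : R) * (u ^ i * u' ^ (i - 1 - k)))).symm
  rw [step2]
  have step3 : ∀ k ∈ range L, ∑ i ∈ Ico (k + 1) L, ((x i * x (i - 1 - k) : ℤ) : R) * (u ^ i * u' ^ (i - 1 - k))
      = (AF L x (k+1) : R) * u ^ (k+1) := by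
    intro k _
    rw [Finset.sum_Ico_eq_sum_range]
    have : ∀ j, ((x (k+1+j) * x (k+1+j-1-k) : ℤ) : R) * (u ^ (k+1+j) * u' ^ (k+1+j-1-k))
        = ((x j * x (j + (k+1)) : ℤ) : R) * u ^ (k+1) := by
      intro j
      have e1 : k+1+j-1-k = j := by omega
      have e2 : k+1+j = j+(k+1) := by omega
      rw [e1, e2, pow_add]
      push_cast
      calc (x (j+(k+1)) : R) * x j * (u ^ j * u ^ (k+1) * u' ^ j)
          = (x (j+(k+1)) : R) * x j * u ^ (k+1) * (u ^ j * u' ^ j) := by ring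
        _ = (x j : R) * x (j+(k+1)) * u ^ (k+1) := by rw [huu]; ring
    simp only [this]
    rw [← Finset.sum_mul, AF]
    push_cast
    ring
  rw [Finset.sum_congr rfl step3, Finset.sum_Ico_eq_sum_range]
  rcases Nat.eq_zero_or_pos L with hL | hL
  · simp [hL]
  obtain ⟨L', rfl⟩ : ∃ L', L = L' + 1 := ⟨L - 1, by omega⟩
  rw [Finset.sum_range_succ]
  have hz : AF (L'+1) x (L'+1) = 0 := by simp [AF]
  rw [hz]
  simp only [Nat.add_sub_cancel]
  rw [Int.cast_zero, zero_mul, add_zero]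
  exact Finset.sum_congr rfl fun j _ => by rw [Nat.add_comm 1 j]

lemma corr_mul {R : Type*} [CommRing R] (L : ℕ) (x : ℕ → ℤ) (u u' : R)
    (h : u * u' = 1) :
    (∑ i ∈ range L, (x i : R) * u ^ i) * (∑ j ∈ range L, (x j : R) * u' ^ j)
      = (AF L x 0 : R) + ∑ k ∈ Ico 1 L, (AF L x k : R) * (u ^ k + u' ^ k) := by
  have huu : ∀ j : ℕ, u ^ j * u' ^ j = 1 := fun j => by rw [← mul_pow, h, one_pow]
  rw [Finset.sum_mul_sum]
  have split : ∀ i ∈ range L, ∑ j ∈ range L, ((x i : R) * u ^ i) * ((x j : R) * u' ^ j)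
      = ((∑ j ∈ range i, ((x i * x j : ℤ) : R) * (u ^ i * u' ^ j))
          + ((x i * x i : ℤ) : R) * (u ^ i * u' ^ i))
        + ∑ j ∈ Ico (i+1) L, ((x i * x j : ℤ) : R) * (u ^ i * u' ^ j) := by
    intro i hi
    have conv1 : ∀ j, ((x i : R) * u ^ i) * ((x j : R) * u' ^ j)
        = ((x i * x j : ℤ) : R) * (u ^ i * u' ^ j) := by intro j; push_cast; ring
    simp only [conv1]
    rw [← Finset.sum_range_succ, Finset.range_eq_Ico, Finset.range_eq_Ico]
    exact (Finset.sum_Ico_consecutive _ (Nat.zero_le _) (mem_range.mp hi)).symm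
  rw [Finset.sum_congr rfl split]
  rw [Finset.sum_add_distrib, Finset.sum_add_distrib]
  have t1 : ∑ i ∈ range L, ∑ j ∈ range i, ((x i * x j : ℤ) : R) * (u ^ i * u' ^ j)
      = ∑ k ∈ Ico 1 L, (AF L x k : R) * u ^ k := strictHalf L x u u' h
  have t2 : ∑ i ∈ range L, ((x i * x i : ℤ) : R) * (u ^ i * u' ^ i) = (AF L x 0 : R) := by
    have : ∀ i ∈ range L, ((x i * x i : ℤ) : R) * (u ^ i * u' ^ i) = ((x i * x i : ℤ) : R) := by
      intro i _; rw [huu, mul_one]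
    rw [Finset.sum_congr rfl this, AF]
    push_cast
    simp
  have t3 : ∑ i ∈ range L, ∑ j ∈ Ico (i+1) L, ((x i * x j : ℤ) : R) * (u ^ i * u' ^ j)
      = ∑ k ∈ Ico 1 L, (AF L x k : R) * u' ^ k := by
    rw [Finset.range_eq_Ico, Finset.sum_Ico_Ico_comm' 0 L, ← Finset.range_eq_Ico]
    simp only [Nat.Ico_zero_eq_range]
    have conv2 : ∀ j ∈ range L, ∑ i ∈ range j, ((x i * x j : ℤ) : R) * (u ^ i * u' ^ j)
        = ∑ i ∈ range j, ((x j * x i : ℤ) : R) * (u' ^ j * u ^ i) := by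
      intro j _
      exact Finset.sum_congr rfl fun i _ => by push_cast; ring
    rw [Finset.sum_congr rfl conv2]
    exact strictHalf L x u' u (by rw [mul_comm]; exact h)
  rw [t1, t2, t3]
  have expand : ∑ k ∈ Ico 1 L, (AF L x k : R) * (u ^ k + u' ^ k)
      = ∑ k ∈ Ico 1 L, (AF L x k : R) * u ^ k + ∑ k ∈ Ico 1 L, (AF L x k : R) * u' ^ k := by
    rw [← Finset.sum_add_distrib]
    exact Finset.sum_congr rfl fun k _ => by ring
  rw [expand]
  ring

lemma corr_mul_nega {R : Type*} [CommRing R] (M : ℕ) (x : ℕ → ℤ) (u u' : R)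
    (h : u * u' = 1) (hu : u ^ M = -1) :
    (∑ i ∈ range M, (x i : R) * u ^ i) * (∑ j ∈ range M, (x j : R) * u' ^ j)
      = (AF M x 0 : R) + ∑ k ∈ Ico 1 M, (NAF M x k : R) * u ^ k := by
  rw [corr_mul M x u u' h]
  congr 1
  have hinv : ∀ k ∈ Ico 1 M, u' ^ k = - u ^ (M - k) := by
    intro k hk
    have hk' : k ≤ M := by simp at hk; omega
    have h1 : u ^ k * (- u ^ (M - k)) = 1 := by
      rw [← neg_mul_eq_mul_neg, ← pow_add]
      rw [show k + (M - k) = M by omega, hu, neg_neg]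
    calc u' ^ k = u' ^ k * (u ^ k * (- u ^ (M - k))) := by rw [h1, mul_one]
      _ = (u ^ k * u' ^ k) * (- u ^ (M - k)) := by ring
      _ = - u ^ (M - k) := by rw [← mul_pow, h, one_pow, one_mul]
  have step : ∀ k ∈ Ico 1 M, (AF M x k : R) * (u ^ k + u' ^ k)
      = (AF M x k : R) * u ^ k - (AF M x k : R) * u ^ (M - k) := by
    intro k hk; rw [hinv k hk]; ring
  rw [Finset.sum_congr rfl step, Finset.sum_sub_distrib]
  have refl2 : ∑ k ∈ Ico 1 M, (AF M x k : R) * u ^ (M - k)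
      = ∑ k ∈ Ico 1 M, (AF M x (M - k) : R) * u ^ k := by
    refine Finset.sum_nbij' (fun k => M - k) (fun k => M - k) ?_ ?_ ?_ ?_ ?_ <;>
      simp only [Finset.mem_Ico] <;> intro i hi
    · omega
    · omega
    · omega
    · omega
    · have h2 : M - (M - i) = i := by omega
      rw [h2]
  rw [refl2, ← Finset.sum_sub_distrib]
  apply Finset.sum_congr rfl
  intro k _
  rw [NAF]
  push_cast
  ring

lemma coeffs_eq_zero (N : ℕ) (hN : 0 < N) (m : ℕ → ℤ)
    (h : ∑ k ∈ range N, (m k : AdjoinRoot ((X : ℤ[X]) ^ N + 1)) *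
          (AdjoinRoot.root ((X : ℤ[X]) ^ N + 1)) ^ k = 0) :
    ∀ k, k < N → m k = 0 := by
  set fpol : ℤ[X] := (X : ℤ[X]) ^ N + 1 with hf
  set p : ℤ[X] := ∑ k ∈ range N, C (m k) * X ^ k with hp
  have hmk : AdjoinRoot.mk fpol p = 0 := by
    rw [hp, map_sum]
    rw [← h]
    apply Finset.sum_congr rfl
    intro k _
    rw [map_mul, map_pow, AdjoinRoot.mk_X, AdjoinRoot.mk_C]
    rfl
  have hdvd : fpol ∣ p := (AdjoinRoot.mk_eq_zero).mp hmk
  have hdegf : fpol.degree = N := by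
    rw [hf, ← Polynomial.C_1, Polynomial.degree_X_pow_add_C hN]
  have hdegp : p.degree < fpol.degree := by
    rw [hdegf, hp]
    apply lt_of_le_of_lt (Polynomial.degree_sum_le _ _)
    rw [Finset.sup_lt_iff (by exact_mod_cast WithBot.bot_lt_coe N)]
    intro k hk
    apply lt_of_le_of_lt (Polynomial.degree_C_mul_X_pow_le _ _)
    exact_mod_cast WithBot.coe_lt_coe.mpr (mem_range.mp hk)
  have hp0 : p = 0 := Polynomial.eq_zero_of_dvd_of_degree_lt hdvd hdegp
  intro k hk
  have : p.coeff k = m k := by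
    rw [hp, Polynomial.finset_sum_coeff]
    rw [Finset.sum_eq_single k]
    · simp
    · intro j _ hj
      rw [Polynomial.coeff_C_mul, Polynomial.coeff_X_pow, if_neg (fun hh => hj hh.symm)]
      ring
    · intro hnk; exact absurd (mem_range.mpr hk) hnk
  rw [← this, hp0, Polynomial.coeff_zero]

-- double-indexing of range (g*v)
lemma sum_range_mul_eq {R : Type*} [AddCommMonoid R] (g v : ℕ) (hg : 0 < g) (G : ℕ → R) :
    ∑ i ∈ range (g * v), G i = ∑ q ∈ range v, ∑ r ∈ range g, G (q * g + r) := by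
  rw [← Finset.sum_product']
  refine Finset.sum_nbij' (fun i => (i / g, i % g)) (fun p => p.1 * g + p.2) ?_ ?_ ?_ ?_ ?_
  · intro i hi
    simp only [Finset.mem_product, Finset.mem_range] at *
    constructor
    · exact Nat.div_lt_of_lt_mul (by rw [mul_comm] at hi ⊢; omega)
    · exact Nat.mod_lt _ hg
  · intro p hp
    simp only [Finset.mem_product, Finset.mem_range] at *
    have := hp.1; have := hp.2
    calc p.1 * g + p.2 < p.1 * g + g := by omega
      _ = (p.1 + 1) * g := by ring
      _ ≤ v * g := Nat.mul_le_mul_right _ (by omega)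
      _ = g * v := mul_comm _ _
  · intro i _
    exact Nat.div_add_mod' i g
  · intro p hp
    simp only [Finset.mem_product, Finset.mem_range] at hp
    have h1 : (p.1 * g + p.2) / g = p.1 := by
      rw [add_comm, Nat.add_mul_div_right _ _ hg, Nat.div_eq_of_lt hp.2, zero_add]
    have h2 : (p.1 * g + p.2) % g = p.2 := by
      rw [add_comm, Nat.add_mul_mod_self_right, Nat.mod_eq_of_lt hp.2]
    rw [h1, h2]
  · intro i _
    simp only
    rw [Nat.div_add_mod']

lemma sum_reflect_inv {R : Type*} [CommRing R] (v : ℕ) (x : ℕ → ℤ) (u u' : R)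
    (h : u * u' = 1) :
    ∑ q ∈ range v, (x (v - 1 - q) : R) * u ^ q
      = u ^ (v - 1) * ∑ q ∈ range v, (x q : R) * u' ^ q := by
  rw [Finset.mul_sum]
  rw [← Finset.sum_range_reflect (fun q => u ^ (v - 1) * ((x q : R) * u' ^ q)) v]
  apply Finset.sum_congr rfl
  intro q hq
  have hq' : q < v := mem_range.mp hq
  have e1 : u ^ (v - 1) = u ^ q * u ^ (v - 1 - q) := by
    rw [← pow_add]; congr 1; omega
  rw [e1]
  calc (x (v - 1 - q) : R) * u ^ q
      = (x (v - 1 - q) : R) * u ^ q * (u ^ (v - 1 - q) * u' ^ (v - 1 - q)) := by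
        rw [← mul_pow, h, one_pow, mul_one]
    _ = u ^ q * u ^ (v - 1 - q) * ((x (v - 1 - q) : R) * u' ^ (v - 1 - q)) := by ring

lemma qgr_lt {g v q r : ℕ} (hq : q < v) (hr : r < g) : q * g + r < g * v :=
  calc q * g + r < q * g + g := by omega
    _ = (q + 1) * g := by ring
    _ ≤ v * g := Nat.mul_le_mul_right _ (by omega)
    _ = g * v := mul_comm _ _

lemma qgr_div {g : ℕ} (hg : 0 < g) (q r : ℕ) (hr : r < g) : (q * g + r) / g = q := by
  rw [add_comm, Nat.add_mul_div_right _ _ hg, Nat.div_eq_of_lt hr, zero_add]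

lemma qgr_mod {g : ℕ} (q r : ℕ) (hr : r < g) : (q * g + r) % g = r := by
  rw [add_comm, Nat.add_mul_mod_self_right, Nat.mod_eq_of_lt hr]

end Aux
lemma turyn_core {R : Type*} [CommRing R] (g v w : ℕ) (hg : 0 < g) (hv : 0 < v)
    (a b c d e f : ℕ → ℤ)
    (hgolay : ∀ k, 0 < k → k < g → AF g a k + AF g b k = 0)
    (hdiagab : ∑ i ∈ Finset.range g, (a i * a i + b i * b i) = 2 * g)
    (hweight' : AF v c 0 + AF v d 0 = (w : ℤ))
    (hnct : ∀ k, 0 < k → k < v → NAF v c k + NAF v d k = 0)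
    (he : ∀ i, i < g * v →
      2 * e i = (a (i % g) + b (i % g)) * c (i / g) + (a (i % g) - b (i % g)) * d (v - 1 - i / g))
    (hf : ∀ i, i < g * v →
      2 * f i = (b (i % g) - a (i % g)) * c (v - 1 - i / g) + (a (i % g) + b (i % g)) * d (i / g))
    (z : R) (hzN : z ^ (g * v) = -1) :
    ((4 * (AF (g * v) e 0 + AF (g * v) f 0) - 4 * (g * w) : ℤ) : R)
      + ∑ k ∈ Ico 1 (g * v), ((4 * (NAF (g * v) e k + NAF (g * v) f k) : ℤ) : R) * z ^ k = 0 := by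
  have hgv : 0 < g * v := Nat.mul_pos hg hv
  set z' : R := -z ^ (g * v - 1) with hz'def
  have hzz' : z * z' = 1 := by
    rw [hz'def, mul_neg]
    have h1 : z * z ^ (g * v - 1) = z ^ (g * v) := by
      rw [← pow_succ']
      congr 1
      omega
    rw [h1, hzN, neg_neg]
  have hyy' : z ^ g * z' ^ g = 1 := by rw [← mul_pow, hzz', one_pow]
  have hy'y : z' ^ g * z ^ g = 1 := by rw [mul_comm]; exact hyy'
  have hyv : (z ^ g) ^ v = -1 := by rw [← pow_mul]; exact hzN
  have hYY' : (z ^ g) ^ (v - 1) * (z' ^ g) ^ (v - 1) = 1 := by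
    rw [← mul_pow, hyy', one_pow]
  -- Golay translation
  have hGolay : (∑ r ∈ range g, (a r : R) * z ^ r) * (∑ r ∈ range g, (a r : R) * z' ^ r)
      + (∑ r ∈ range g, (b r : R) * z ^ r) * (∑ r ∈ range g, (b r : R) * z' ^ r)
      = ((2 * g : ℤ) : R) := by
    rw [corr_mul g a z z' hzz', corr_mul g b z z' hzz']
    have hzero : ∑ k ∈ Ico 1 g, (AF g a k : R) * (z ^ k + z' ^ k)
        + ∑ k ∈ Ico 1 g, (AF g b k : R) * (z ^ k + z' ^ k) = 0 := by
      rw [← Finset.sum_add_distrib]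
      apply Finset.sum_eq_zero
      intro k hk
      have hk' := Finset.mem_Ico.mp hk
      have hzk := hgolay k (by omega) hk'.2
      have hcomb : (AF g a k : R) * (z ^ k + z' ^ k) + (AF g b k : R) * (z ^ k + z' ^ k)
          = ((AF g a k + AF g b k : ℤ) : R) * (z ^ k + z' ^ k) := by push_cast; ring
      rw [hcomb, hzk, Int.cast_zero, zero_mul]
    have hdiag : AF g a 0 + AF g b 0 = 2 * (g : ℤ) := by
      rw [AF, AF, Nat.sub_zero, ← Finset.sum_add_distrib]
      simp only [Nat.add_zero]
      exact hdiagab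
    calc (AF g a 0 : R) + ∑ k ∈ Ico 1 g, (AF g a k : R) * (z ^ k + z' ^ k)
        + ((AF g b 0 : R) + ∑ k ∈ Ico 1 g, (AF g b k : R) * (z ^ k + z' ^ k))
        = ((AF g a 0 + AF g b 0 : ℤ) : R)
          + (∑ k ∈ Ico 1 g, (AF g a k : R) * (z ^ k + z' ^ k)
            + ∑ k ∈ Ico 1 g, (AF g b k : R) * (z ^ k + z' ^ k)) := by push_cast; ring
      _ = ((2 * g : ℤ) : R) := by rw [hzero, hdiag, add_zero]
  -- NCT translation
  have hNCT : (∑ q ∈ range v, (c q : R) * (z ^ g) ^ q) * (∑ q ∈ range v, (c q : R) * (z' ^ g) ^ q)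
      + (∑ q ∈ range v, (d q : R) * (z ^ g) ^ q) * (∑ q ∈ range v, (d q : R) * (z' ^ g) ^ q)
      = ((w : ℤ) : R) := by
    rw [corr_mul_nega v c (z ^ g) (z' ^ g) hyy' hyv, corr_mul_nega v d (z ^ g) (z' ^ g) hyy' hyv]
    have hzero : ∑ k ∈ Ico 1 v, (NAF v c k : R) * (z ^ g) ^ k
        + ∑ k ∈ Ico 1 v, (NAF v d k : R) * (z ^ g) ^ k = 0 := by
      rw [← Finset.sum_add_distrib]
      apply Finset.sum_eq_zero
      intro k hk
      have hk' := Finset.mem_Ico.mp hk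
      have hzk := hnct k (by omega) hk'.2
      have hcomb : (NAF v c k : R) * (z ^ g) ^ k + (NAF v d k : R) * (z ^ g) ^ k
          = ((NAF v c k + NAF v d k : ℤ) : R) * (z ^ g) ^ k := by push_cast; ring
      rw [hcomb, hzk, Int.cast_zero, zero_mul]
    calc (AF v c 0 : R) + ∑ k ∈ Ico 1 v, (NAF v c k : R) * (z ^ g) ^ k
        + ((AF v d 0 : R) + ∑ k ∈ Ico 1 v, (NAF v d k : R) * (z ^ g) ^ k)
        = ((AF v c 0 + AF v d 0 : ℤ) : R)
          + (∑ k ∈ Ico 1 v, (NAF v c k : R) * (z ^ g) ^ k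
            + ∑ k ∈ Ico 1 v, (NAF v d k : R) * (z ^ g) ^ k) := by push_cast; ring
      _ = ((w : ℤ) : R) := by rw [hzero, hweight', add_zero]
  -- structure of the Turyn product sequences
  have hstruct : ∀ (x s t p1 p2 : ℕ → ℤ) (u : R),
      (∀ i, i < g * v → 2 * x i = s (i % g) * p1 (i / g) + t (i % g) * p2 (v - 1 - i / g)) →
      (2 : R) * (∑ i ∈ range (g * v), (x i : R) * u ^ i)
        = (∑ r ∈ range g, (s r : R) * u ^ r) * (∑ q ∈ range v, (p1 q : R) * (u ^ g) ^ q)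
          + (∑ r ∈ range g, (t r : R) * u ^ r) *
              (∑ q ∈ range v, (p2 (v - 1 - q) : R) * (u ^ g) ^ q) := by
    intro x s t p1 p2 u hx
    rw [Finset.mul_sum, sum_range_mul_eq g v hg (fun i => (2 : R) * ((x i : R) * u ^ i)),
      Finset.sum_mul_sum, Finset.sum_mul_sum]
    rw [Finset.sum_comm (s := range g) (t := range v)
        (f := fun r q => ((s r : R) * u ^ r) * ((p1 q : R) * (u ^ g) ^ q)),
      Finset.sum_comm (s := range g) (t := range v)
        (f := fun r q => ((t r : R) * u ^ r) * ((p2 (v - 1 - q) : R) * (u ^ g) ^ q))]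
    rw [← Finset.sum_add_distrib]
    apply Finset.sum_congr rfl
    intro q hq
    rw [← Finset.sum_add_distrib]
    apply Finset.sum_congr rfl
    intro r hr
    have hq' := mem_range.mp hq
    have hr' := mem_range.mp hr
    have hb := hx (q * g + r) (qgr_lt hq' hr')
    rw [qgr_mod q r hr', qgr_div hg q r hr'] at hb
    have hu : u ^ (q * g + r) = (u ^ g) ^ q * u ^ r := by
      rw [← pow_mul, ← pow_add]
      congr 1
      ring
    calc (2 : R) * ((x (q * g + r) : R) * u ^ (q * g + r))
        = ((2 * x (q * g + r) : ℤ) : R) * u ^ (q * g + r) := by push_cast; ring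
      _ = ((s r * p1 q + t r * p2 (v - 1 - q) : ℤ) : R) * u ^ (q * g + r) := by rw [hb]
      _ = (s r : R) * u ^ r * ((p1 q : R) * (u ^ g) ^ q)
          + (t r : R) * u ^ r * ((p2 (v - 1 - q) : R) * (u ^ g) ^ q) := by
          rw [hu]; push_cast; ring
  -- apply structure to e (with u = z and u = z')
  have heE : ∀ i, i < g * v → 2 * e i = (fun r => a r + b r) (i % g) * c (i / g)
      + (fun r => a r - b r) (i % g) * d (v - 1 - i / g) := by
    intro i hi; simpa using he i hi
  have hfF : ∀ i, i < g * v → 2 * f i = (fun r => a r + b r) (i % g) * d (i / g)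
      + (fun r => b r - a r) (i % g) * c (v - 1 - i / g) := by
    intro i hi; simp only; rw [hf i hi]; ring
  have hE := hstruct e (fun r => a r + b r) (fun r => a r - b r) c d z heE
  have hE' := hstruct e (fun r => a r + b r) (fun r => a r - b r) c d z' heE
  have hF := hstruct f (fun r => a r + b r) (fun r => b r - a r) d c z hfF
  have hF' := hstruct f (fun r => a r + b r) (fun r => b r - a r) d c z' hfF
  rw [sum_reflect_inv v d (z ^ g) (z' ^ g) hyy'] at hE
  rw [sum_reflect_inv v d (z' ^ g) (z ^ g) hy'y] at hE'
  rw [sum_reflect_inv v c (z ^ g) (z' ^ g) hyy'] at hF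
  rw [sum_reflect_inv v c (z' ^ g) (z ^ g) hy'y] at hF'
  -- split the (a±b) sums
  have hsplit : ∀ u : R, (∑ r ∈ range g, ((a r + b r : ℤ) : R) * u ^ r)
      = (∑ r ∈ range g, (a r : R) * u ^ r) + (∑ r ∈ range g, (b r : R) * u ^ r) := by
    intro u
    rw [← Finset.sum_add_distrib]
    exact Finset.sum_congr rfl fun r _ => by push_cast; ring
  have hsplit2 : ∀ u : R, (∑ r ∈ range g, ((a r - b r : ℤ) : R) * u ^ r)
      = (∑ r ∈ range g, (a r : R) * u ^ r) - (∑ r ∈ range g, (b r : R) * u ^ r) := by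
    intro u
    rw [← Finset.sum_sub_distrib]
    exact Finset.sum_congr rfl fun r _ => by push_cast; ring
  have hsplit3 : ∀ u : R, (∑ r ∈ range g, ((b r - a r : ℤ) : R) * u ^ r)
      = (∑ r ∈ range g, (b r : R) * u ^ r) - (∑ r ∈ range g, (a r : R) * u ^ r) := by
    intro u
    rw [← Finset.sum_sub_distrib]
    exact Finset.sum_congr rfl fun r _ => by push_cast; ring
  rw [hsplit z, hsplit2 z] at hE
  rw [hsplit z', hsplit2 z'] at hE'
  rw [hsplit z, hsplit3 z] at hF
  rw [hsplit z', hsplit3 z'] at hF'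
  -- the grand identity
  have hbig : ((2 : R) * ∑ i ∈ range (g * v), (e i : R) * z ^ i)
        * ((2 : R) * ∑ i ∈ range (g * v), (e i : R) * z' ^ i)
      + ((2 : R) * ∑ i ∈ range (g * v), (f i : R) * z ^ i)
        * ((2 : R) * ∑ i ∈ range (g * v), (f i : R) * z' ^ i)
      = ((4 * (g * w) : ℤ) : R) := by
    rw [hE, hE', hF, hF']
    push_cast at hGolay hNCT ⊢
    linear_combination
      (2 * ((∑ q ∈ range v, (c q : R) * (z ^ g) ^ q) * (∑ q ∈ range v, (c q : R) * (z' ^ g) ^ q)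
        + (∑ q ∈ range v, (d q : R) * (z ^ g) ^ q) * (∑ q ∈ range v, (d q : R) * (z' ^ g) ^ q))) * hGolay
      + (4 * (g : R)) * hNCT
      + (((∑ r ∈ range g, (a r : R) * z ^ r) - ∑ r ∈ range g, (b r : R) * z ^ r)
          * ((∑ r ∈ range g, (a r : R) * z' ^ r) - ∑ r ∈ range g, (b r : R) * z' ^ r)
          * ((∑ q ∈ range v, (c q : R) * (z ^ g) ^ q) * (∑ q ∈ range v, (c q : R) * (z' ^ g) ^ q)
            + (∑ q ∈ range v, (d q : R) * (z ^ g) ^ q) * (∑ q ∈ range v, (d q : R) * (z' ^ g) ^ q))) * hYY'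
  -- final combination
  have hEE := corr_mul_nega (g * v) e z z' hzz' hzN
  have hFF := corr_mul_nega (g * v) f z z' hzz' hzN
  have hexp : ∑ k ∈ Ico 1 (g * v), ((4 * (NAF (g * v) e k + NAF (g * v) f k) : ℤ) : R) * z ^ k
      = 4 * ((∑ k ∈ Ico 1 (g * v), (NAF (g * v) e k : R) * z ^ k)
          + ∑ k ∈ Ico 1 (g * v), (NAF (g * v) f k : R) * z ^ k) := by
    rw [← Finset.sum_add_distrib, Finset.mul_sum]
    exact Finset.sum_congr rfl fun k _ => by push_cast; ring
  rw [hexp]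
  push_cast at hbig ⊢
  linear_combination hbig - 4 * hEE - 4 * hFF

/-- the Turyn product of a Golay pair `(a,b)` of length `g` and a
negaperiodic complementary ternary pair `(c,d)` of length `v` and total weight `w` is a
negaperiodic complementary ternary pair `(e,f)` of length `gv` and weight `gw`.
The coefficient sequences at index `i = q·g + r` are
`2 e_i = (a_r+b_r)c_q + (a_r-b_r)d_{v-1-q}` and `2 f_i = (b_r-a_r)c_{v-1-q} + (a_r+b_r)d_q`. -/
theorem turyn_product_nct_pair (g v w : ℕ) (hg : 0 < g) (hv : 0 < v)
    (a b c d e f : ℕ → ℤ)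
    (hab : ∀ i, i < g → (a i = 1 ∨ a i = -1) ∧ (b i = 1 ∨ b i = -1))
    (hgolay : ∀ k, 0 < k → k < g → AF g a k + AF g b k = 0)
    (hcd : ∀ i, i < v → (c i = 0 ∨ c i = 1 ∨ c i = -1) ∧ (d i = 0 ∨ d i = 1 ∨ d i = -1))
    (hweight : ∑ i ∈ Finset.range v, ((c i) ^ 2 + (d i) ^ 2) = (w : ℤ))
    (hnct : ∀ k, 0 < k → k < v → NAF v c k + NAF v d k = 0)
    (he : ∀ i, i < g * v →
      2 * e i = (a (i % g) + b (i % g)) * c (i / g) + (a (i % g) - b (i % g)) * d (v - 1 - i / g))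
    (hf : ∀ i, i < g * v →
      2 * f i = (b (i % g) - a (i % g)) * c (v - 1 - i / g) + (a (i % g) + b (i % g)) * d (i / g)) :
    (∀ i, i < g * v → e i = 0 ∨ e i = 1 ∨ e i = -1) ∧
    (∀ i, i < g * v → f i = 0 ∨ f i = 1 ∨ f i = -1) ∧
    (∑ i ∈ Finset.range (g * v), ((e i) ^ 2 + (f i) ^ 2) = ((g * w : ℕ) : ℤ)) ∧
    (∀ k, 0 < k → k < g * v → NAF (g * v) e k + NAF (g * v) f k = 0) := by
  have hgv : 0 < g * v := Nat.mul_pos hg hv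
  -- entries of e
  have hent_e : ∀ i, i < g * v → e i = 0 ∨ e i = 1 ∨ e i = -1 := by
    intro i hi
    set r := i % g with hr0
    set q := i / g with hq0
    have hr : r < g := Nat.mod_lt _ hg
    have hq : q < v := Nat.div_lt_of_lt_mul hi
    have hq' : v - 1 - q < v := lt_of_le_of_lt (Nat.sub_le _ _) (Nat.sub_lt hv one_pos)
    obtain ⟨ha, hb⟩ := hab r hr
    obtain ⟨hc1, -⟩ := hcd q hq
    obtain ⟨-, hd2⟩ := hcd (v - 1 - q) hq'
    have h2e := he i hi
    rcases ha with ha | ha <;> rcases hb with hb | hb <;>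
      rcases hc1 with h1 | h1 | h1 <;> rcases hd2 with h2 | h2 | h2 <;>
      rw [ha, hb, h1, h2] at h2e <;> omega
  -- entries of f
  have hent_f : ∀ i, i < g * v → f i = 0 ∨ f i = 1 ∨ f i = -1 := by
    intro i hi
    set r := i % g with hr0
    set q := i / g with hq0
    have hr : r < g := Nat.mod_lt _ hg
    have hq : q < v := Nat.div_lt_of_lt_mul hi
    have hq' : v - 1 - q < v := lt_of_le_of_lt (Nat.sub_le _ _) (Nat.sub_lt hv one_pos)
    obtain ⟨ha, hb⟩ := hab r hr
    obtain ⟨-, hd1⟩ := hcd q hq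
    obtain ⟨hc2, -⟩ := hcd (v - 1 - q) hq'
    have h2f := hf i hi
    rcases ha with ha | ha <;> rcases hb with hb | hb <;>
      rcases hc2 with h1 | h1 | h1 <;> rcases hd1 with h2 | h2 | h2 <;>
      rw [ha, hb, h1, h2] at h2f <;> omega
  -- diagonal sums
  have hdiagab : ∑ i ∈ Finset.range g, (a i * a i + b i * b i) = 2 * (g : ℤ) := by
    have hconst : ∀ i ∈ range g, a i * a i + b i * b i = 2 := by
      intro i hi
      obtain ⟨ha, hb⟩ := hab i (mem_range.mp hi)
      rcases ha with h | h <;> rcases hb with h' | h' <;> rw [h, h'] <;> norm_num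
    rw [Finset.sum_congr rfl hconst, Finset.sum_const, card_range]
    ring
  have hweight' : AF v c 0 + AF v d 0 = (w : ℤ) := by
    rw [AF, AF, Nat.sub_zero, ← Finset.sum_add_distrib, ← hweight]
    apply Finset.sum_congr rfl
    intro i _
    simp only [Nat.add_zero]
    ring
  -- apply the core lemma in the ring  ℤ[X]/(X^(gv)+1)
  have hzN : (AdjoinRoot.root ((X : ℤ[X]) ^ (g * v) + 1)) ^ (g * v) = -1 := by
    have h0 : AdjoinRoot.mk ((X : ℤ[X]) ^ (g * v) + 1) ((X : ℤ[X]) ^ (g * v) + 1) = 0 :=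
      AdjoinRoot.mk_self
    rw [map_add, map_pow, AdjoinRoot.mk_X, map_one] at h0
    linear_combination h0
  have hcore := turyn_core g v w hg hv a b c d e f hgolay hdiagab hweight' hnct he hf
    (AdjoinRoot.root ((X : ℤ[X]) ^ (g * v) + 1)) hzN
  have hsum0 : ∑ k ∈ range (g * v),
      (((fun k => if k = 0 then 4 * (AF (g * v) e 0 + AF (g * v) f 0) - 4 * ((g : ℤ) * w)
          else 4 * (NAF (g * v) e k + NAF (g * v) f k)) k : ℤ) : AdjoinRoot ((X : ℤ[X]) ^ (g * v) + 1))
        * (AdjoinRoot.root ((X : ℤ[X]) ^ (g * v) + 1)) ^ k = 0 := by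
    rw [Finset.range_eq_Ico, Finset.sum_eq_sum_Ico_succ_bot hgv]
    have ek : ∀ k ∈ Ico (0 + 1) (g * v),
        (((fun k => if k = 0 then 4 * (AF (g * v) e 0 + AF (g * v) f 0) - 4 * ((g : ℤ) * w)
            else 4 * (NAF (g * v) e k + NAF (g * v) f k)) k : ℤ) : AdjoinRoot ((X : ℤ[X]) ^ (g * v) + 1))
          * (AdjoinRoot.root ((X : ℤ[X]) ^ (g * v) + 1)) ^ k
        = ((4 * (NAF (g * v) e k + NAF (g * v) f k) : ℤ) : AdjoinRoot ((X : ℤ[X]) ^ (g * v) + 1))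
          * (AdjoinRoot.root ((X : ℤ[X]) ^ (g * v) + 1)) ^ k := by
      intro k hk
      have hk1 : k ≠ 0 := by have := (Finset.mem_Ico.mp hk).1; omega
      simp only [if_neg hk1]
    rw [Finset.sum_congr rfl ek]
    simp only [if_pos rfl, pow_zero, mul_one, if_true]
    convert hcore using 2
  have hcoeff := coeffs_eq_zero (g * v) hgv _ hsum0
  refine ⟨hent_e, hent_f, ?_, ?_⟩
  · -- weight
    have h0 := hcoeff 0 hgv
    rw [if_pos rfl] at h0
    have hAF : ∑ i ∈ Finset.range (g * v), ((e i) ^ 2 + (f i) ^ 2)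
        = AF (g * v) e 0 + AF (g * v) f 0 := by
      rw [AF, AF, Nat.sub_zero, ← Finset.sum_add_distrib]
      apply Finset.sum_congr rfl
      intro i _
      simp only [Nat.add_zero]
      ring
    rw [hAF]
    push_cast
    linarith
  · -- negaperiodic autocorrelation
    intro k hk0 hkv
    have h1 := hcoeff k hkv
    simp only [if_neg (by omega : k ≠ 0)] at h1
    linarith
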